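/- In the measure contraction setting above, for each fixed x₀ with d(x₀,Y) = δ > 0 and each dyadic scale ε = 2^{-l} with εD ≤ δ, the dynamical plan Π from δ_{x₀} to the normalized measure satisfies Π({γ : γ meets Y}) ≤ 2^{-l} · C · A · δ^{-N} · D^{N+2}, where A bounds m(Y^{εD}) ≤ A (εD)². -/

import Mathlib

open MeasureTheory Set

/-- in the measure contraction setting, with `δ = d(x₀,Y) > 0`,
`D = diam X`, and a dyadic scale `ε = 2^{-l}` with `ε D ≤ δ`, the dynamical plan `Pl`
from `δ_{x₀}` to `m` (whose normalized restrictions satisfy the contraction estimate)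
gives mass at most `2^{-l} · C · A' · δ^{-N} · D^{N+2}` to the set of geodesics
meeting `Y`, where `m(Y^{εD}) ≤ A' (εD)²`. -/
theorem mcp_dyadic_estimate
    {X : Type*} [MetricSpace X] [CompactSpace X] [MeasurableSpace X] [BorelSpace X]
    (m : Measure X) [IsProbabilityMeasure m]
    (C N : ℝ) (hC : 0 < C) (hN : 1 ≤ N)
    (Y : Set X) (hY : IsClosed Y)
    (x₀ : X) (hx₀ : x₀ ∉ Y)
    (δ D : ℝ) (hδ : δ = Metric.infDist x₀ Y) (hδpos : 0 < δ)
    (hD : D = Metric.diam (Set.univ : Set X)) (hDpos : 0 < D)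
    (l : ℕ) (hl : (2:ℝ)^(-(l:ℝ)) * D ≤ δ)
    (A' : ℝ) (hA' : m (Metric.thickening ((2:ℝ)^(-(l:ℝ)) * D) Y) ≤
      ENNReal.ofReal (A' * ((2:ℝ)^(-(l:ℝ)) * D) ^ 2))
    (Pl : Measure {γ : ℝ → X // ∀ s ∈ Icc (0:ℝ) 1, ∀ t ∈ Icc (0:ℝ) 1,
        dist (γ s) (γ t) = |s - t| * dist (γ 0) (γ 1)})
    (hPl : IsProbabilityMeasure Pl)
    (hPl0 : Measure.map (fun γ => γ.1 0) Pl = Measure.dirac x₀)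
    (hPl1 : Measure.map (fun γ => γ.1 1) Pl = m)
    -- the normalized restriction of `Pl` to any set of geodesics of positive mass is
    -- again a dynamical plan satisfying the measure contraction estimate
    (hMCP : ∀ Γ : Set {γ : ℝ → X // ∀ s ∈ Icc (0:ℝ) 1, ∀ t ∈ Icc (0:ℝ) 1,
        dist (γ s) (γ t) = |s - t| * dist (γ 0) (γ 1)},
      MeasurableSet Γ → 0 < Pl Γ → ∀ t ∈ Ioc (0:ℝ) 1,
        Measure.map (fun γ => γ.1 t) ((Pl Γ)⁻¹ • Pl.restrict Γ) ≤
          (ENNReal.ofReal (C / t ^ N) * (Pl Γ)⁻¹) • m) :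
    Pl {γ | ∃ t ∈ Icc (0:ℝ) 1, γ.1 t ∈ Y} ≤
      ENNReal.ofReal ((2:ℝ)^(-(l:ℝ)) * C * A' * δ ^ (-N) * D ^ (N + 2)) := by
  rcases Y.eq_empty_or_nonempty with rfl | ⟨y₀, hy₀⟩
  · have h0 : {γ : {γ : ℝ → X // ∀ s ∈ Icc (0:ℝ) 1, ∀ t ∈ Icc (0:ℝ) 1,
        dist (γ s) (γ t) = |s - t| * dist (γ 0) (γ 1)} |
          ∃ t ∈ Icc (0:ℝ) 1, γ.1 t ∈ (∅ : Set X)} = ∅ := by simp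
    rw [h0]
    simp
  set E : ℝ := (2:ℝ)^(-(l:ℝ)) with hE
  have hEpos : 0 < E := Real.rpow_pos_of_pos (by norm_num) _
  have hEinv : E = ((2:ℝ)^l)⁻¹ := by
    rw [hE, ← Real.rpow_natCast 2 l, ← Real.rpow_neg (by norm_num : (0:ℝ) ≤ 2)]
  have hE2 : E * 2^l = 1 := by
    rw [hEinv]; field_simp
  have hED : 0 < E * D := mul_pos hEpos hDpos
  have meas_eval : ∀ t : ℝ, Measurable fun γ : {γ : ℝ → X // ∀ s ∈ Icc (0:ℝ) 1,
      ∀ t ∈ Icc (0:ℝ) 1, dist (γ s) (γ t) = |s - t| * dist (γ 0) (γ 1)} => γ.1 t :=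
    fun t => (measurable_pi_apply t).comp measurable_subtype_coe
  have hL : ∀ γ : {γ : ℝ → X // ∀ s ∈ Icc (0:ℝ) 1, ∀ t ∈ Icc (0:ℝ) 1,
      dist (γ s) (γ t) = |s - t| * dist (γ 0) (γ 1)}, dist (γ.1 0) (γ.1 1) ≤ D := by
    intro γ
    rw [hD]
    exact Metric.dist_le_diam_of_mem isCompact_univ.isBounded (mem_univ _) (mem_univ _)
  have hnull : Pl {γ | γ.1 0 ≠ x₀} = 0 := by
    have h0 : {γ : {γ : ℝ → X // ∀ s ∈ Icc (0:ℝ) 1, ∀ t ∈ Icc (0:ℝ) 1,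
        dist (γ s) (γ t) = |s - t| * dist (γ 0) (γ 1)} | γ.1 0 ≠ x₀}
        = (fun γ : {γ : ℝ → X // ∀ s ∈ Icc (0:ℝ) 1, ∀ t ∈ Icc (0:ℝ) 1,
        dist (γ s) (γ t) = |s - t| * dist (γ 0) (γ 1)} => γ.1 0) ⁻¹' {x₀}ᶜ := rfl
    rw [h0, ← Measure.map_apply (meas_eval 0) (measurableSet_singleton x₀).compl, hPl0]
    simp
  -- measurability of hitting sets on closed subintervals of [0,1]
  have hitMeas : ∀ a b : ℝ, 0 ≤ a → b ≤ 1 → a ≤ b →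
      MeasurableSet {γ : {γ : ℝ → X // ∀ s ∈ Icc (0:ℝ) 1, ∀ t ∈ Icc (0:ℝ) 1,
        dist (γ s) (γ t) = |s - t| * dist (γ 0) (γ 1)} | ∃ t ∈ Icc a b, γ.1 t ∈ Y} := by
    intro a b ha hb hab
    have hsub : Icc a b ⊆ Icc (0:ℝ) 1 := Icc_subset_Icc ha hb
    set Q : Set ℝ := insert a (insert b (Icc a b ∩ range ((↑) : ℚ → ℝ))) with hQ
    have hQsub : Q ⊆ Icc a b := by
      intro q hq
      simp only [hQ, mem_insert_iff, mem_inter_iff] at hq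
      rcases hq with h | h | ⟨hq, _⟩
      · subst h; exact ⟨le_refl q, hab⟩
      · subst h; exact ⟨hab, le_refl q⟩
      · exact hq
    have hQc : Q.Countable :=
      (((Set.countable_range _).mono inter_subset_right).insert b).insert a
    have hkey : {γ : {γ : ℝ → X // ∀ s ∈ Icc (0:ℝ) 1, ∀ t ∈ Icc (0:ℝ) 1,
        dist (γ s) (γ t) = |s - t| * dist (γ 0) (γ 1)} | ∃ t ∈ Icc a b, γ.1 t ∈ Y}
        = ⋂ k : ℕ, ⋃ q ∈ Q, {γ : {γ : ℝ → X // ∀ s ∈ Icc (0:ℝ) 1, ∀ t ∈ Icc (0:ℝ) 1,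
        dist (γ s) (γ t) = |s - t| * dist (γ 0) (γ 1)} |
          Metric.infDist (γ.1 q) Y < 1/((k:ℝ)+1)} := by
      ext γ
      simp only [mem_setOf_eq, mem_iInter, mem_iUnion, exists_prop]
      constructor
      · rintro ⟨t, ht, htY⟩ k
        set L := dist (γ.1 0) (γ.1 1) with hLd
        have hL0 : 0 ≤ L := dist_nonneg
        have hd : ∀ q ∈ Icc a b, Metric.infDist (γ.1 q) Y ≤ |q - t| * L := by
          intro q hq
          calc Metric.infDist (γ.1 q) Y ≤ dist (γ.1 q) (γ.1 t) :=
                Metric.infDist_le_dist_of_mem htY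
          _ = |q - t| * L := γ.2 q (hsub hq) t (hsub ht)
        have hkpos : (0:ℝ) < 1/((k:ℝ)+1) := by positivity
        rcases eq_or_lt_of_le hL0 with hL0' | hLpos
        · refine ⟨a, Or.inl rfl, lt_of_le_of_lt ?_ hkpos⟩
          simpa [← hL0'] using hd a ⟨le_refl a, hab⟩
        rcases eq_or_lt_of_le ht.2 with htb | htb
        · refine ⟨b, Or.inr (Or.inl rfl), lt_of_le_of_lt ?_ hkpos⟩
          simpa [htb] using hd b ⟨hab, le_refl b⟩
        · have hq0 : (0:ℝ) < 1/(((k:ℝ)+1)*L) := by positivity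
          obtain ⟨q, hq1, hq2⟩ := exists_rat_btwn (lt_min htb (lt_add_of_pos_right t hq0))
          have hqb : (q:ℝ) ≤ b := (hq2.trans_le (min_le_left _ _)).le
          have hqa : a ≤ (q:ℝ) := ht.1.trans hq1.le
          refine ⟨q, Or.inr (Or.inr ⟨⟨hqa, hqb⟩, mem_range_self q⟩), ?_⟩
          have h1 : |(q:ℝ) - t| < 1/(((k:ℝ)+1)*L) := by
            rw [abs_of_pos (by linarith)]
            have := hq2.trans_le (min_le_right _ _)
            linarith
          calc Metric.infDist (γ.1 q) Y ≤ |(q:ℝ) - t| * L := hd q ⟨hqa, hqb⟩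
          _ < (1/(((k:ℝ)+1)*L)) * L := mul_lt_mul_of_pos_right h1 hLpos
          _ = 1/((k:ℝ)+1) := by field_simp
      · intro h
        choose u hu hud using h
        obtain ⟨t, ht, φ, hφ, hconv⟩ :=
          (isCompact_Icc : IsCompact (Icc a b)).tendsto_subseq (fun k => hQsub (hu k))
        set L := dist (γ.1 0) (γ.1 1) with hLd
        have hbnd : ∀ k, Metric.infDist (γ.1 t) Y
            ≤ 1/((φ k : ℝ)+1) + dist t (u (φ k)) * L := by
          intro k
          have h1 : Metric.infDist (γ.1 t) Y
              ≤ Metric.infDist (γ.1 (u (φ k))) Y + dist (γ.1 t) (γ.1 (u (φ k))) :=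
            Metric.infDist_le_infDist_add_dist
          have h2 : dist (γ.1 t) (γ.1 (u (φ k))) = dist t (u (φ k)) * L := by
            rw [γ.2 t (hsub ht) (u (φ k)) (hsub (hQsub (hu (φ k)))), Real.dist_eq]
          have h3 := (hud (φ k)).le
          linarith [h1, h2 ▸ h1]
        have hb0 : Filter.Tendsto (fun k => 1/((φ k : ℝ)+1) + dist t (u (φ k)) * L)
            Filter.atTop (nhds 0) := by
          have h1 : Filter.Tendsto (fun k => 1/((φ k : ℝ)+1)) Filter.atTop (nhds 0) :=
            tendsto_one_div_add_atTop_nhds_zero_nat.comp hφ.tendsto_atTop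
          have h2 : Filter.Tendsto (fun k => dist t (u (φ k)) * L) Filter.atTop (nhds 0) := by
            have h2' : Filter.Tendsto (fun k => dist t ((u ∘ φ) k)) Filter.atTop
                (nhds (dist t t)) := Filter.Tendsto.dist tendsto_const_nhds hconv
            have := h2'.mul_const L
            simpa using this
          simpa using h1.add h2
        have h0 : Metric.infDist (γ.1 t) Y ≤ 0 :=
          ge_of_tendsto hb0 (Filter.Eventually.of_forall hbnd)
        have h00 : Metric.infDist (γ.1 t) Y = 0 :=
          le_antisymm h0 Metric.infDist_nonneg
        exact ⟨t, ht, (hY.mem_iff_infDist_zero ⟨y₀, hy₀⟩).mpr h00⟩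
    rw [hkey]
    refine MeasurableSet.iInter fun k => MeasurableSet.biUnion hQc fun q _ => ?_
    exact measurableSet_lt
      (((Metric.continuous_infDist_pt Y).measurable).comp (meas_eval q)) measurable_const
  -- the dyadic pieces
  set Γi : ℕ → Set {γ : ℝ → X // ∀ s ∈ Icc (0:ℝ) 1, ∀ t ∈ Icc (0:ℝ) 1,
      dist (γ s) (γ t) = |s - t| * dist (γ 0) (γ 1)} :=
    fun i => {γ | ∃ t ∈ Ioc ((i:ℝ)*E) (((i:ℝ)+1)*E), γ.1 t ∈ Y} with hΓi
  have hub : ∀ i : ℕ, i < 2^l → ((i:ℝ)+1) * E ≤ 1 := by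
    intro i hi
    have h1 : ((i:ℝ)+1) ≤ 2^l := by exact_mod_cast Nat.succ_le_of_lt hi
    calc ((i:ℝ)+1)*E ≤ 2^l * E := mul_le_mul_of_nonneg_right h1 hEpos.le
    _ = 1 := by rw [mul_comm]; exact hE2
  have measΓi : ∀ i : ℕ, i < 2^l → MeasurableSet (Γi i) := by
    intro i hi
    have hrw : Γi i = ⋃ n : ℕ, {γ : {γ : ℝ → X // ∀ s ∈ Icc (0:ℝ) 1, ∀ t ∈ Icc (0:ℝ) 1,
        dist (γ s) (γ t) = |s - t| * dist (γ 0) (γ 1)} |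
          ∃ t ∈ Icc ((i:ℝ)*E + E/((n:ℝ)+1)) (((i:ℝ)+1)*E), γ.1 t ∈ Y} := by
      ext γ
      simp only [hΓi, mem_setOf_eq, mem_iUnion, mem_Ioc, mem_Icc]
      constructor
      · rintro ⟨t, ⟨ht1, ht2⟩, htY⟩
        obtain ⟨n, hn⟩ := exists_nat_gt (E/(t - (i:ℝ)*E))
        have htpos : 0 < t - (i:ℝ)*E := by linarith
        have hnpos : (0:ℝ) < n := lt_trans (by positivity) hn
        refine ⟨n, t, ⟨?_, ht2⟩, htY⟩
        have hlt : E/((n:ℝ)+1) < t - (i:ℝ)*E := by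
          rw [div_lt_iff₀ (by positivity)]
          have h' := (div_lt_iff₀ htpos).mp hn
          nlinarith
        linarith
      · rintro ⟨n, t, ⟨ht1, ht2⟩, htY⟩
        have h' : 0 < E/((n:ℝ)+1) := by positivity
        exact ⟨t, ⟨by linarith, ht2⟩, htY⟩
    rw [hrw]
    refine MeasurableSet.iUnion fun n => hitMeas _ _ ?_ (hub i hi) ?_
    · positivity
    · have h' : E/((n:ℝ)+1) ≤ E := by
        rw [div_le_iff₀ (by positivity)]
        nlinarith [hEpos.le]
      nlinarith [h']
  -- covering
  have hcover : {γ : {γ : ℝ → X // ∀ s ∈ Icc (0:ℝ) 1, ∀ t ∈ Icc (0:ℝ) 1,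
      dist (γ s) (γ t) = |s - t| * dist (γ 0) (γ 1)} | ∃ t ∈ Icc (0:ℝ) 1, γ.1 t ∈ Y}
      ⊆ (⋃ i ∈ Finset.range (2^l), Γi i) ∪ {γ | γ.1 0 ≠ x₀} := by
    rintro γ ⟨t, ht, htY⟩
    by_cases h0 : γ.1 0 = x₀
    · left
      have htpos : 0 < t := by
        rcases ht.1.eq_or_lt with h | h
        · exfalso; apply hx₀; rw [← h0]; rw [← h] at htY; exact htY
        · exact h
      set k := ⌈t / E⌉₊ with hk
      have hk1 : 1 ≤ k := Nat.one_le_ceil_iff.mpr (by positivity)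
      have hk2 : k ≤ 2^l := by
        apply Nat.ceil_le.mpr
        rw [div_le_iff₀ hEpos]
        push_cast
        calc t ≤ 1 := ht.2
        _ = E * 2^l := hE2.symm
        _ = 2^l * E := mul_comm _ _
      have hik : ((k:ℝ) - 1) * E < t := by
        have h1 : (k:ℝ) < t/E + 1 := Nat.ceil_lt_add_one (by positivity)
        have h2 : ((k:ℝ) - 1) < t/E := by linarith
        calc ((k:ℝ)-1)*E < (t/E)*E := mul_lt_mul_of_pos_right h2 hEpos
        _ = t := by field_simp
      have hik2 : t ≤ (k:ℝ) * E := by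
        have h1 : t/E ≤ (k:ℝ) := Nat.le_ceil _
        calc t = (t/E)*E := by field_simp
        _ ≤ (k:ℝ)*E := mul_le_mul_of_nonneg_right h1 hEpos.le
      refine mem_biUnion (Finset.mem_range.mpr (show k - 1 < 2^l by omega)) ?_
      have hcast : ((k-1:ℕ):ℝ) = (k:ℝ) - 1 := by
        push_cast [Nat.cast_sub hk1]; ring
      exact ⟨t, ⟨by rw [hcast]; exact hik, by rw [hcast, sub_add_cancel]; exact hik2⟩, htY⟩
    · right; exact h0
  -- per-piece bound
  set U := Metric.thickening (E * D) Y with hU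
  have hUmeas : MeasurableSet U := Metric.isOpen_thickening.measurableSet
  have keybound : ∀ i : ℕ, i < 2^l →
      Pl (Γi i) ≤ ENNReal.ofReal (C / (δ/D)^N) * m U := by
    intro i hi
    rcases eq_or_ne (Pl (Γi i)) 0 with hz | hz
    · rw [hz]; exact zero_le
    have hpos : 0 < Pl (Γi i) := pos_iff_ne_zero.mpr hz
    set ti := ((i:ℝ)+1)*E with hti
    have hti1 : ti ≤ 1 := hub i hi
    have htipos : 0 < ti := by positivity
    have hsub2 : ∀ γ : {γ : ℝ → X // ∀ s ∈ Icc (0:ℝ) 1, ∀ t ∈ Icc (0:ℝ) 1,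
        dist (γ s) (γ t) = |s - t| * dist (γ 0) (γ 1)},
        γ ∈ Γi i → γ.1 0 = x₀ → (γ.1 ti ∈ U ∧ δ/D ≤ ti) := by
      rintro γ ⟨s, ⟨hs1, hs2⟩, hsY⟩ h0
      have hs0 : 0 ≤ s := le_trans (by positivity) hs1.le
      have hs01 : s ∈ Icc (0:ℝ) 1 := ⟨hs0, hs2.trans hti1⟩
      set L := dist (γ.1 0) (γ.1 1) with hLd
      have hLD : L ≤ D := hL γ
      have hdist : dist (γ.1 0) (γ.1 s) = s * L := by
        rw [γ.2 0 ⟨le_refl 0, zero_le_one⟩ s hs01, abs_of_nonpos (by linarith)]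
        ring
      have hδs : δ ≤ s * L := by
        rw [← hdist, hδ, ← h0]
        exact Metric.infDist_le_dist_of_mem hsY
      have hsD : δ/D ≤ s := by
        rw [div_le_iff₀ hDpos]
        calc δ ≤ s*L := hδs
        _ ≤ s*D := mul_le_mul_of_nonneg_left hLD hs0
      constructor
      · rw [hU, Metric.mem_thickening_iff]
        refine ⟨γ.1 s, hsY, ?_⟩
        have hd2 : dist (γ.1 ti) (γ.1 s) = (ti - s) * L := by
          rw [γ.2 ti ⟨htipos.le, hti1⟩ s hs01, abs_of_nonneg (by linarith)]
        rw [hd2]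
        calc (ti - s) * L ≤ (ti - s) * D := mul_le_mul_of_nonneg_left hLD (by linarith)
        _ < E * D := by
          apply mul_lt_mul_of_pos_right _ hDpos
          have h' : (i:ℝ)*E = ti - E := by rw [hti]; ring
          linarith [hs1, h']
      · exact hsD.trans hs2
    have hne : ∃ γ, γ ∈ Γi i ∧ γ.1 0 = x₀ := by
      by_contra h
      push_neg at h
      have hss : Γi i ⊆ {γ | γ.1 0 ≠ x₀} := fun γ hγ => h γ hγ
      exact hz (le_antisymm ((measure_mono hss).trans hnull.le) (zero_le))
    obtain ⟨γ₀, hγ₀, h0γ₀⟩ := hne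
    have htiδ : δ/D ≤ ti := (hsub2 γ₀ hγ₀ h0γ₀).2
    have key := hMCP (Γi i) (measΓi i hi) hpos ti ⟨htipos, hti1⟩ U
    rw [Measure.map_smul, Measure.smul_apply, Measure.smul_apply,
      Measure.map_apply (meas_eval ti) hUmeas,
      Measure.restrict_apply ((meas_eval ti) hUmeas)] at key
    have hfull : Pl ((fun γ : {γ : ℝ → X // ∀ s ∈ Icc (0:ℝ) 1, ∀ t ∈ Icc (0:ℝ) 1,
        dist (γ s) (γ t) = |s - t| * dist (γ 0) (γ 1)} => γ.1 ti) ⁻¹' U ∩ Γi i)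
        = Pl (Γi i) := by
      refine le_antisymm (measure_mono inter_subset_right) ?_
      have hss : Γi i ⊆ ((fun γ : {γ : ℝ → X // ∀ s ∈ Icc (0:ℝ) 1, ∀ t ∈ Icc (0:ℝ) 1,
          dist (γ s) (γ t) = |s - t| * dist (γ 0) (γ 1)} => γ.1 ti) ⁻¹' U ∩ Γi i)
          ∪ {γ | γ.1 0 ≠ x₀} := by
        intro γ hγ
        by_cases h0 : γ.1 0 = x₀
        · exact Or.inl ⟨(hsub2 γ hγ h0).1, hγ⟩
        · exact Or.inr h0
      calc Pl (Γi i) ≤ Pl (((fun γ : {γ : ℝ → X // ∀ s ∈ Icc (0:ℝ) 1, ∀ t ∈ Icc (0:ℝ) 1,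
          dist (γ s) (γ t) = |s - t| * dist (γ 0) (γ 1)} => γ.1 ti) ⁻¹' U ∩ Γi i))
          + Pl {γ | γ.1 0 ≠ x₀} := (measure_mono hss).trans (measure_union_le _ _)
      _ = _ := by rw [hnull, add_zero]
    rw [hfull] at key
    have hfin : Pl (Γi i) ≠ ⊤ := (measure_lt_top Pl _).ne
    rw [smul_eq_mul, smul_eq_mul, ENNReal.inv_mul_cancel hz hfin] at key
    have h2 : Pl (Γi i) ≤ ENNReal.ofReal (C/ti^N) * m U := by
      calc Pl (Γi i) = Pl (Γi i) * 1 := (mul_one _).symm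
      _ ≤ Pl (Γi i) * (ENNReal.ofReal (C/ti^N) * (Pl (Γi i))⁻¹ * m U) :=
        mul_le_mul_right key _
      _ = (Pl (Γi i) * (Pl (Γi i))⁻¹) * (ENNReal.ofReal (C/ti^N) * m U) := by ring
      _ = ENNReal.ofReal (C/ti^N) * m U := by
        rw [ENNReal.mul_inv_cancel hz hfin, one_mul]
    refine h2.trans (mul_le_mul_left (ENNReal.ofReal_le_ofReal ?_) _)
    have hδD : 0 < δ/D := div_pos hδpos hDpos
    have hrp : (δ/D)^N ≤ ti^N := Real.rpow_le_rpow hδD.le htiδ (by linarith)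
    have hp1 : (0:ℝ) < (δ/D)^N := Real.rpow_pos_of_pos hδD N
    exact div_le_div_of_nonneg_left hC.le hp1 hrp
  -- sum up
  have hsum : Pl {γ | ∃ t ∈ Icc (0:ℝ) 1, γ.1 t ∈ Y}
      ≤ ((2^l : ℕ) : ENNReal) * (ENNReal.ofReal (C / (δ/D)^N) * m U) := by
    calc Pl {γ | ∃ t ∈ Icc (0:ℝ) 1, γ.1 t ∈ Y}
        ≤ Pl ((⋃ i ∈ Finset.range (2^l), Γi i) ∪ {γ | γ.1 0 ≠ x₀}) := measure_mono hcover
    _ ≤ Pl (⋃ i ∈ Finset.range (2^l), Γi i) + Pl {γ | γ.1 0 ≠ x₀} := measure_union_le _ _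
    _ = Pl (⋃ i ∈ Finset.range (2^l), Γi i) := by rw [hnull, add_zero]
    _ ≤ ∑ i ∈ Finset.range (2^l), Pl (Γi i) := measure_biUnion_finset_le _ _
    _ ≤ ∑ i ∈ Finset.range (2^l), ENNReal.ofReal (C / (δ/D)^N) * m U :=
      Finset.sum_le_sum fun i hi => keybound i (Finset.mem_range.mp hi)
    _ = ((2^l : ℕ) : ENNReal) * (ENNReal.ofReal (C / (δ/D)^N) * m U) := by
      rw [Finset.sum_const, Finset.card_range, nsmul_eq_mul]
  refine hsum.trans ?_
  have hcast : ((2^l : ℕ) : ENNReal) = ENNReal.ofReal ((2:ℝ)^l) := by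
    rw [← ENNReal.ofReal_natCast]
    norm_num
  rcases lt_or_ge A' 0 with hA0 | hA0
  · have hmU : m U = 0 := by
      refine le_antisymm (hA'.trans ?_) (zero_le)
      have hle : A' * (E*D)^2 ≤ 0 := by nlinarith [sq_nonneg (E*D), hED]
      exact (ENNReal.ofReal_eq_zero.mpr hle).le
    rw [hmU, mul_zero, mul_zero]
    exact zero_le
  · have hmU : m U ≤ ENNReal.ofReal (A' * (E*D)^2) := hA'
    calc ((2^l : ℕ) : ENNReal) * (ENNReal.ofReal (C / (δ/D)^N) * m U)
        ≤ ((2^l : ℕ) : ENNReal) * (ENNReal.ofReal (C / (δ/D)^N)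
          * ENNReal.ofReal (A' * (E*D)^2)) := mul_le_mul_right (mul_le_mul_right hmU _) _
    _ = ENNReal.ofReal ((2:ℝ)^l * (C / (δ/D)^N * (A' * (E*D)^2))) := by
      rw [hcast, ← ENNReal.ofReal_mul (by positivity), ← ENNReal.ofReal_mul (by positivity)]
    _ ≤ ENNReal.ofReal (E * C * A' * δ ^ (-N) * D ^ (N + 2)) := by
      apply ENNReal.ofReal_le_ofReal
      apply le_of_eq
      have h1 : (δ/D)^N = δ^N / D^N := Real.div_rpow hδpos.le hDpos.le N
      have h2 : D^(N+(2:ℝ)) = D^N * D^(2:ℕ) := by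
        rw [Real.rpow_add hDpos]
        congr 1
        rw [show ((2:ℝ)) = ((2:ℕ):ℝ) by norm_num, Real.rpow_natCast]
      have h3 : δ^(-N) = (δ^N)⁻¹ := Real.rpow_neg hδpos.le N
      have h4 : (0:ℝ) < δ^N := Real.rpow_pos_of_pos hδpos N
      have h5 : (0:ℝ) < D^N := Real.rpow_pos_of_pos hDpos N
      rw [h1, h2, h3, hEinv]
      have h6 : (0:ℝ) < (2:ℝ)^l := by positivity
      field_simp
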